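/- Let k be an algebraically closed field of characteristic zero, G a group, A a finite abelian group, and i : A → G an injective group homomorphism with normal image. Suppose φ : G → Aut(A) is a group homomorphism such that g·i(a)·g⁻¹ = i(φ_g(a)) for all g ∈ G and a ∈ A, and let β : Â × Â → kˣ be a bimultiplicative, nondegenerate, G-invariant (β(χ∘φ_g, ξ∘φ_g) = β(χ,ξ)) and skewsymmetric form. Then the element R = |A|⁻² · Σ_{a,b∈A} Σ_{χ,ξ∈Â} β(χ,ξ)·χ(a)·ξ(b) · (i(a) ⊗ i(b)) is a unitary universal R-matrix on k[G]: it is a universal R-matrix and satisfies R·τ(R) = 1. -/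

import Mathlib

open scoped TensorProduct

noncomputable section

variable (k G : Type*) [Field k] [Group G]

/-- The comultiplication `Δ(g) = g ⊗ g` of the group algebra `k[G]`, as an algebra map. -/
def gComul : MonoidAlgebra k G →ₐ[k] MonoidAlgebra k G ⊗[k] MonoidAlgebra k G :=
  MonoidAlgebra.lift k _ G
    { toFun := fun g => MonoidAlgebra.of k G g ⊗ₜ[k] MonoidAlgebra.of k G g
      map_one' := by rw [Algebra.TensorProduct.one_def]; simp [MonoidAlgebra.one_def]
      map_mul' := fun g h => by simp [Algebra.TensorProduct.tmul_mul_tmul] }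

/-- The flip of the tensor square of the group algebra. -/
abbrev gτ : MonoidAlgebra k G ⊗[k] MonoidAlgebra k G →ₐ[k]
    MonoidAlgebra k G ⊗[k] MonoidAlgebra k G :=
  (Algebra.TensorProduct.comm k (MonoidAlgebra k G) (MonoidAlgebra k G)).toAlgHom

/-- `x ⊗ y ↦ x ⊗ y ⊗ 1`. -/
abbrev gι₁₂ : MonoidAlgebra k G ⊗[k] MonoidAlgebra k G →ₐ[k]
    MonoidAlgebra k G ⊗[k] (MonoidAlgebra k G ⊗[k] MonoidAlgebra k G) :=
  Algebra.TensorProduct.map (AlgHom.id k _) Algebra.TensorProduct.includeLeft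

/-- `x ⊗ y ↦ x ⊗ 1 ⊗ y`. -/
abbrev gι₁₃ : MonoidAlgebra k G ⊗[k] MonoidAlgebra k G →ₐ[k]
    MonoidAlgebra k G ⊗[k] (MonoidAlgebra k G ⊗[k] MonoidAlgebra k G) :=
  Algebra.TensorProduct.map (AlgHom.id k _) Algebra.TensorProduct.includeRight

/-- `x ⊗ y ↦ 1 ⊗ x ⊗ y`. -/
abbrev gι₂₃ : MonoidAlgebra k G ⊗[k] MonoidAlgebra k G →ₐ[k]
    MonoidAlgebra k G ⊗[k] (MonoidAlgebra k G ⊗[k] MonoidAlgebra k G) :=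
  Algebra.TensorProduct.includeRight

/-- `id ⊗ Δ`. -/
abbrev gidΔ : MonoidAlgebra k G ⊗[k] MonoidAlgebra k G →ₐ[k]
    MonoidAlgebra k G ⊗[k] (MonoidAlgebra k G ⊗[k] MonoidAlgebra k G) :=
  Algebra.TensorProduct.map (AlgHom.id k _) (gComul k G)

/-- `Δ ⊗ id`, re-associated. -/
abbrev gΔid : MonoidAlgebra k G ⊗[k] MonoidAlgebra k G →ₐ[k]
    MonoidAlgebra k G ⊗[k] (MonoidAlgebra k G ⊗[k] MonoidAlgebra k G) :=
  (Algebra.TensorProduct.assoc k k k _ _ _).toAlgHom.comp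
    (Algebra.TensorProduct.map (gComul k G) (AlgHom.id k _))

/-- `R` is a universal R-matrix (quasitriangular structure) on the group algebra `k[G]`. -/
def IsGroupRMatrix (R : MonoidAlgebra k G ⊗[k] MonoidAlgebra k G) : Prop :=
  IsUnit R ∧
  (∀ h : MonoidAlgebra k G, R * gτ k G (gComul k G h) = gComul k G h * R) ∧
  gidΔ k G R = gι₁₃ k G R * gι₁₂ k G R ∧
  gΔid k G R = gι₁₃ k G R * gι₂₃ k G R



open Finset
open scoped Classical
set_option linter.unusedSectionVars false
set_option linter.unusedVariables false
set_option maxHeartbeats 1000000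
set_option synthInstance.maxHeartbeats 1000000

variable {k G}

lemma single_eq_smul_of (g : G) (c : k) :
    (MonoidAlgebra.single g c : MonoidAlgebra k G) = c • MonoidAlgebra.of k G g := by
  simp [MonoidAlgebra.of_apply, MonoidAlgebra.smul_single']

lemma single_finset_sum' {ι : Type*} (s : Finset ι) (a : G) (f : ι → k) :
    MonoidAlgebra.single a (∑ x ∈ s, f x) = ∑ x ∈ s, (MonoidAlgebra.single a (f x) : MonoidAlgebra k G) :=
  map_sum (MonoidAlgebra.singleAddHom a) f s

lemma gComul_of (g : G) :
    gComul k G (MonoidAlgebra.of k G g) = MonoidAlgebra.of k G g ⊗ₜ[k] MonoidAlgebra.of k G g := by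
  unfold gComul; rw [MonoidAlgebra.lift_of]; rfl

lemma gComul_single (g : G) (c : k) :
    gComul k G (MonoidAlgebra.single g c)
      = c • (MonoidAlgebra.of k G g ⊗ₜ[k] MonoidAlgebra.of k G g) := by
  rw [single_eq_smul_of, map_smul, gComul_of]


section Aux
variable {k : Type*} [Field k] [IsAlgClosed k] [CharZero k]
variable {A : Type*} [CommGroup A] [Fintype A]

instance aux_enough : HasEnoughRootsOfUnity k (Monoid.exponent A) := by
  have h : Monoid.exponent A ≠ 0 := Monoid.exponent_ne_zero_of_finite
  have : NeZero ((Monoid.exponent A : k)) := ⟨Nat.cast_ne_zero.mpr h⟩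
  infer_instance

lemma char_finite : Finite (A →* kˣ) :=
  Finite.of_equiv A (CommGroup.monoidHom_mulEquiv_of_hasEnoughRootsOfUnity A k).some.symm.toEquiv

noncomputable instance charFintype : Fintype (A →* kˣ) := @Fintype.ofFinite _ (char_finite)

lemma card_char : Fintype.card (A →* kˣ) = Fintype.card A :=
  Fintype.card_congr (CommGroup.monoidHom_mulEquiv_of_hasEnoughRootsOfUnity A k).some.toEquiv

lemma exists_char {a : A} (ha : a ≠ 1) : ∃ χ : A →* kˣ, χ a ≠ 1 :=
  CommGroup.exists_apply_ne_one_of_hasEnoughRootsOfUnity A k ha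


lemma sum_char_apply (χ : A →* kˣ) :
    ∑ a : A, ((χ a : kˣ) : k) = if χ = 1 then (Fintype.card A : k) else 0 := by
  split_ifs with h
  · subst h; simp
  · obtain ⟨b, hb⟩ : ∃ b, χ b ≠ 1 := by
      by_contra h'; push_neg at h'; exact h (MonoidHom.ext fun b => h' b)
    have key : ((χ b : kˣ) : k) * ∑ a : A, ((χ a : kˣ) : k) = ∑ a : A, ((χ a : kˣ) : k) := by
      rw [Finset.mul_sum]
      exact Fintype.sum_bijective _ (Group.mulLeft_bijective b) _ _
        (fun a => by rw [map_mul]; push_cast; ring)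
    have hb' : ((χ b : kˣ) : k) - 1 ≠ 0 := by
      simpa [sub_eq_zero, Units.val_eq_one] using hb
    have := mul_eq_zero.mp (by linear_combination key : (((χ b : kˣ) : k) - 1) * (∑ a : A, ((χ a : kˣ) : k)) = 0)
    tauto

lemma sum_char_eval (a : A) :
    ∑ χ : A →* kˣ, ((χ a : kˣ) : k) = if a = 1 then (Fintype.card A : k) else 0 := by
  split_ifs with h
  · subst h; simp [card_char (k := k)]
  · obtain ⟨ψ, hψ⟩ := exists_char (k := k) h
    have key : ((ψ a : kˣ) : k) * ∑ χ : A →* kˣ, ((χ a : kˣ) : k)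
        = ∑ χ : A →* kˣ, ((χ a : kˣ) : k) := by
      rw [Finset.mul_sum]
      exact Fintype.sum_bijective _ (Group.mulLeft_bijective ψ) _ _
        (fun χ => by rw [MonoidHom.mul_apply]; push_cast; ring)
    have hb' : ((ψ a : kˣ) : k) - 1 ≠ 0 := by
      simpa [sub_eq_zero, Units.val_eq_one] using hψ
    have := mul_eq_zero.mp (by linear_combination key :
      (((ψ a : kˣ) : k) - 1) * (∑ χ : A →* kˣ, ((χ a : kˣ) : k)) = 0)
    tauto

lemma cardA_ne : (Fintype.card A : k) ≠ 0 := Nat.cast_ne_zero.mpr Fintype.card_ne_zero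

/-- the kernel sum `∑_a χ(a⁻¹)ψ(a)` -/
lemma sum_char_inv_mul (χ ψ : A →* kˣ) :
    ∑ a : A, ((χ a⁻¹ : kˣ) : k) * ((ψ a : kˣ) : k)
      = if ψ = χ then (Fintype.card A : k) else 0 := by
  have h := sum_char_apply (k := k) (χ⁻¹ * ψ)
  have : ∀ a : A, (((χ⁻¹ * ψ) a : kˣ) : k) = ((χ a⁻¹ : kˣ) : k) * ((ψ a : kˣ) : k) := by
    intro a
    simp [MonoidHom.mul_apply, map_inv]
  rw [Fintype.sum_congr _ _ this] at h
  rw [h]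
  rcases em (ψ = χ) with hc | hc
  · rw [hc, if_pos (inv_mul_cancel χ), if_pos rfl]
  · rw [if_neg (fun hh => hc (inv_mul_eq_one.mp hh).symm), if_neg hc]

variable (k)
/-- The idempotent attached to a character. -/
noncomputable def eChar (χ : A →* kˣ) : MonoidAlgebra k A :=
  ∑ a : A, MonoidAlgebra.single a ((Fintype.card A : k)⁻¹ * ((χ a⁻¹ : kˣ) : k))
variable {k}

lemma eChar_mul (χ ψ : A →* kˣ) :
    eChar k χ * eChar k ψ = if ψ = χ then eChar k χ else 0 := by
  unfold eChar
  rw [Finset.sum_mul_sum]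
  have step1 : ∀ a : A,
      ∑ b : A, (MonoidAlgebra.single a ((Fintype.card A : k)⁻¹ * ((χ a⁻¹ : kˣ) : k)) *
        MonoidAlgebra.single b ((Fintype.card A : k)⁻¹ * ((ψ b⁻¹ : kˣ) : k)))
      = ∑ b : A, MonoidAlgebra.single b
          (((Fintype.card A : k)⁻¹ * ((χ a⁻¹ : kˣ) : k)) *
           ((Fintype.card A : k)⁻¹ * ((ψ (a⁻¹ * b)⁻¹ : kˣ) : k))) := by
    intro a
    refine Fintype.sum_equiv (Equiv.mulLeft a) _ _ fun b => ?_
    rw [MonoidAlgebra.single_mul_single, Equiv.coe_mulLeft, inv_mul_cancel_left]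
  rw [Fintype.sum_congr _ _ step1, Finset.sum_comm]
  have step2 : ∀ b : A,
      ∑ a : A, MonoidAlgebra.single b
          (((Fintype.card A : k)⁻¹ * ((χ a⁻¹ : kˣ) : k)) *
           ((Fintype.card A : k)⁻¹ * ((ψ (a⁻¹ * b)⁻¹ : kˣ) : k)))
      = MonoidAlgebra.single b ((Fintype.card A : k)⁻¹ * (Fintype.card A : k)⁻¹ *
          ((ψ b⁻¹ : kˣ) : k) * ∑ a : A, ((χ a⁻¹ : kˣ) : k) * ((ψ a : kˣ) : k)) := by
    intro b
    rw [Finset.mul_sum, ← single_finset_sum']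
    congr 1
    refine Finset.sum_congr rfl fun a _ => ?_
    rw [mul_inv_rev, inv_inv, map_mul]
    push_cast
    ring
  rw [Fintype.sum_congr _ _ step2]
  rw [sum_char_inv_mul]
  split_ifs with h
  · subst h
    refine Finset.sum_congr rfl fun b _ => ?_
    congr 1
    field_simp
  · simp

lemma sum_eChar : ∑ χ : A →* kˣ, eChar k χ = (1 : MonoidAlgebra k A) := by
  unfold eChar
  rw [Finset.sum_comm]
  have : ∀ a : A, ∑ χ : A →* kˣ,
      MonoidAlgebra.single a ((Fintype.card A : k)⁻¹ * ((χ a⁻¹ : kˣ) : k))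
      = MonoidAlgebra.single a ((Fintype.card A : k)⁻¹ *
          (if a⁻¹ = (1 : A) then (Fintype.card A : k) else 0)) := by
    intro a
    rw [← sum_char_eval a⁻¹, Finset.mul_sum, ← single_finset_sum']
  rw [Fintype.sum_congr _ _ this]
  rw [Fintype.sum_eq_single (1 : A)]
  · simp [MonoidAlgebra.one_def, cardA_ne (A := A) (k := k)]
  · intro a ha
    simp [inv_eq_one, ha]

lemma eChar_comul (ξ : A →* kˣ) :
    gComul k A (eChar k ξ) = ∑ χ : A →* kˣ, eChar k χ ⊗ₜ[k] eChar k (χ⁻¹ * ξ) := by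
  set n : k := (Fintype.card A : k) with hn
  have lhs : gComul k A (eChar k ξ)
      = ∑ a : A, (n⁻¹ * ((ξ a⁻¹ : kˣ) : k)) •
          (MonoidAlgebra.of k A a ⊗ₜ[k] MonoidAlgebra.of k A a) := by
    unfold eChar
    rw [map_sum]
    exact Finset.sum_congr rfl fun a _ => gComul_single a _
  have rhs : ∀ χ : A →* kˣ, eChar k χ ⊗ₜ[k] eChar k (χ⁻¹ * ξ)
      = ∑ a : A, ∑ b : A,
          ((n⁻¹ * ((χ a⁻¹ : kˣ) : k)) * (n⁻¹ * (((χ⁻¹ * ξ) b⁻¹ : kˣ) : k))) •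
            (MonoidAlgebra.of k A a ⊗ₜ[k] MonoidAlgebra.of k A b) := by
    intro χ
    unfold eChar
    rw [TensorProduct.sum_tmul]
    refine Finset.sum_congr rfl fun a _ => ?_
    rw [TensorProduct.tmul_sum]
    refine Finset.sum_congr rfl fun b _ => ?_
    rw [single_eq_smul_of, single_eq_smul_of, ← TensorProduct.smul_tmul',
      TensorProduct.tmul_smul, smul_smul]
  rw [lhs, Finset.sum_congr rfl fun χ _ => rhs χ, Finset.sum_comm]
  refine Finset.sum_congr rfl fun a _ => ?_
  rw [Finset.sum_comm]
  have coefsum : ∀ b : A,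
      ∑ χ : A →* kˣ, ((n⁻¹ * ((χ a⁻¹ : kˣ) : k)) * (n⁻¹ * (((χ⁻¹ * ξ) b⁻¹ : kˣ) : k)))
      = if b = a then n⁻¹ * ((ξ a⁻¹ : kˣ) : k) else 0 := by
    intro b
    have e1 : ∀ χ : A →* kˣ,
        ((n⁻¹ * ((χ a⁻¹ : kˣ) : k)) * (n⁻¹ * (((χ⁻¹ * ξ) b⁻¹ : kˣ) : k)))
        = (n⁻¹ * n⁻¹ * ((ξ b⁻¹ : kˣ) : k)) * (((χ (a⁻¹ * b) : kˣ) : k)) := by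
      intro χ
      have h2 : ((χ⁻¹ * ξ) b⁻¹ : kˣ) = χ b * ξ b⁻¹ := by
        simp [MonoidHom.inv_apply]
      rw [h2, map_mul χ a⁻¹ b]
      push_cast
      ring
    rw [Fintype.sum_congr _ _ e1, ← Finset.mul_sum, sum_char_eval (a⁻¹ * b)]
    rcases em (b = a) with hb | hb
    · subst hb
      rw [if_pos (inv_mul_cancel b), if_pos rfl]
      field_simp [hn]
      ring
    · rw [if_neg (fun hh => hb (inv_mul_eq_one.mp hh).symm), if_neg hb, mul_zero]
  have collapse : ∀ b : A,
      (∑ χ : A →* kˣ, ((n⁻¹ * ((χ a⁻¹ : kˣ) : k)) * (n⁻¹ * (((χ⁻¹ * ξ) b⁻¹ : kˣ) : k)))) •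
          (MonoidAlgebra.of k A a ⊗ₜ[k] MonoidAlgebra.of k A b)
      = (if b = a then n⁻¹ * ((ξ a⁻¹ : kˣ) : k) else 0) •
          (MonoidAlgebra.of k A a ⊗ₜ[k] MonoidAlgebra.of k A b) := by
    intro b; rw [coefsum b]
  calc (n⁻¹ * ((ξ a⁻¹ : kˣ) : k)) • (MonoidAlgebra.of k A a ⊗ₜ[k] MonoidAlgebra.of k A a)
      = ∑ b : A, (if b = a then n⁻¹ * ((ξ a⁻¹ : kˣ) : k) else 0) •
          (MonoidAlgebra.of k A a ⊗ₜ[k] MonoidAlgebra.of k A b) := by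
        rw [Fintype.sum_eq_single a (fun b hb => by rw [if_neg hb, zero_smul]), if_pos rfl]
    _ = ∑ b : A, ∑ χ : A →* kˣ,
          ((n⁻¹ * ((χ a⁻¹ : kˣ) : k)) * (n⁻¹ * (((χ⁻¹ * ξ) b⁻¹ : kˣ) : k))) •
            (MonoidAlgebra.of k A a ⊗ₜ[k] MonoidAlgebra.of k A b) := by
        refine Finset.sum_congr rfl fun b _ => ?_
        rw [← Finset.sum_smul, collapse b]
section G
variable {G : Type*} [Group G] (i : A →* G)
variable (k)
noncomputable def Ech (χ : A →* kˣ) : MonoidAlgebra k G :=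
  MonoidAlgebra.mapDomainAlgHom k k i (eChar k χ)
variable {k}

lemma Ech_single (χ : A →* kˣ) : Ech k i χ =
    ∑ a : A, MonoidAlgebra.single (i a) ((Fintype.card A : k)⁻¹ * ((χ a⁻¹ : kˣ) : k)) := by
  unfold Ech eChar
  rw [map_sum]
  exact Finset.sum_congr rfl fun a _ => by simp [MonoidAlgebra.mapDomain_single]

lemma Ech_mul (χ ψ : A →* kˣ) :
    Ech k i χ * Ech k i ψ = if ψ = χ then Ech k i χ else 0 := by
  unfold Ech
  rw [← map_mul, eChar_mul]
  split_ifs <;> simp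

lemma sum_Ech : ∑ χ : A →* kˣ, Ech k i χ = (1 : MonoidAlgebra k G) := by
  unfold Ech
  rw [← map_sum, sum_eChar, map_one]

lemma Ech_comul (ξ : A →* kˣ) :
    gComul k G (Ech k i ξ) = ∑ χ : A →* kˣ, Ech k i χ ⊗ₜ[k] Ech k i (χ⁻¹ * ξ) := by
  have key : (gComul k G).comp (MonoidAlgebra.mapDomainAlgHom k k i)
      = (Algebra.TensorProduct.map (MonoidAlgebra.mapDomainAlgHom k k i)
          (MonoidAlgebra.mapDomainAlgHom k k i)).comp (gComul k A) := by
    refine MonoidAlgebra.algHom_ext ?_ (Subsingleton.elim _ _)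
    intro a
    have h1 : (MonoidAlgebra.single a 1 : MonoidAlgebra k A) = MonoidAlgebra.of k A a := rfl
    simp only [AlgHom.coe_comp, Function.comp_apply, h1, gComul_of,
      MonoidAlgebra.mapDomainAlgHom_apply, MonoidAlgebra.mapDomain_single,
      Algebra.TensorProduct.map_tmul]
    rw [show MonoidAlgebra.mapDomain i (MonoidAlgebra.of k A a) = MonoidAlgebra.of k G (i a) from
      MonoidAlgebra.mapDomain_single, gComul_of]
  have := congrArg (fun F => F (eChar k ξ)) key
  simp only [AlgHom.coe_comp, Function.comp_apply] at this
  rw [show Ech k i ξ = MonoidAlgebra.mapDomainAlgHom k k i (eChar k ξ) from rfl, this,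
    eChar_comul, map_sum]
  exact Finset.sum_congr rfl fun χ _ => by rw [Algebra.TensorProduct.map_tmul]; rfl

lemma Ech_conj (φ : G →* MulAut A)
    (hiφ : ∀ (g : G) (a : A), g * i a * g⁻¹ = i (φ g a)) (g : G) (χ : A →* kˣ) :
    MonoidAlgebra.of k G g * Ech k i χ
      = Ech k i (χ.comp (φ g⁻¹).toMonoidHom) * MonoidAlgebra.of k G g := by
  rw [Ech_single, Ech_single, Finset.mul_sum, Finset.sum_mul]
  refine Fintype.sum_equiv ((φ g).toEquiv) _ _ fun a => ?_
  have hmm : g * i a = i (φ g a) * g := by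
    have := hiφ g a
    rw [← this]; group
  rw [show (MonoidAlgebra.of k G g : MonoidAlgebra k G) = MonoidAlgebra.single g 1 from rfl,
    MonoidAlgebra.single_mul_single, MonoidAlgebra.single_mul_single, one_mul, mul_one, hmm]
  congr 2
  · congr 1
    simp [map_inv]

variable (k)
noncomputable def Sc (c : (A →* kˣ) → (A →* kˣ) → k) :
    MonoidAlgebra k G ⊗[k] MonoidAlgebra k G :=
  ∑ χ : A →* kˣ, ∑ ξ : A →* kˣ, c χ ξ • (Ech k i χ ⊗ₜ[k] Ech k i ξ)

noncomputable def Tc (c : (A →* kˣ) → (A →* kˣ) → (A →* kˣ) → k) :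
    MonoidAlgebra k G ⊗[k] (MonoidAlgebra k G ⊗[k] MonoidAlgebra k G) :=
  ∑ χ : A →* kˣ, ∑ ψ : A →* kˣ, ∑ ξ : A →* kˣ,
    c χ ψ ξ • (Ech k i χ ⊗ₜ[k] (Ech k i ψ ⊗ₜ[k] Ech k i ξ))
variable {k}

lemma Sc_mul (c d : (A →* kˣ) → (A →* kˣ) → k) :
    Sc k i c * Sc k i d = Sc k i (fun χ ξ => c χ ξ * d χ ξ) := by
  unfold Sc
  rw [Finset.sum_mul_sum]
  refine Finset.sum_congr rfl fun χ _ => ?_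
  calc ∑ χ' : A →* kˣ, (∑ ξ : A →* kˣ, c χ ξ • (Ech k i χ ⊗ₜ[k] Ech k i ξ)) *
        (∑ ξ' : A →* kˣ, d χ' ξ' • (Ech k i χ' ⊗ₜ[k] Ech k i ξ'))
        = ∑ χ' : A →* kˣ, ∑ ξ : A →* kˣ, ∑ ξ' : A →* kˣ,
            (c χ ξ * d χ' ξ') • ((Ech k i χ * Ech k i χ') ⊗ₜ[k] (Ech k i ξ * Ech k i ξ')) := by
          refine Finset.sum_congr rfl fun χ' _ => ?_
          rw [Finset.sum_mul_sum]
          refine Finset.sum_congr rfl fun ξ _ => Finset.sum_congr rfl fun ξ' _ => ?_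
          rw [smul_mul_smul_comm, Algebra.TensorProduct.tmul_mul_tmul]
      _ = ∑ ξ : A →* kˣ, ∑ ξ' : A →* kˣ,
            (c χ ξ * d χ ξ') • ((Ech k i χ * Ech k i χ) ⊗ₜ[k] (Ech k i ξ * Ech k i ξ')) := by
          refine Fintype.sum_eq_single χ fun χ' hχ' => ?_
          refine Finset.sum_eq_zero fun ξ _ => Finset.sum_eq_zero fun ξ' _ => ?_
          rw [Ech_mul, if_neg hχ', TensorProduct.zero_tmul, smul_zero]
      _ = ∑ ξ : A →* kˣ, (c χ ξ * d χ ξ) • (Ech k i χ ⊗ₜ[k] Ech k i ξ) := by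
          refine Finset.sum_congr rfl fun ξ _ => ?_
          rw [Fintype.sum_eq_single ξ fun ξ' hξ' => by
            rw [Ech_mul i ξ ξ', if_neg hξ', TensorProduct.tmul_zero, smul_zero]]
          rw [Ech_mul, if_pos rfl, Ech_mul, if_pos rfl]

lemma Sc_one : Sc k i (fun _ _ => (1 : k)) = 1 := by
  unfold Sc
  rw [show (1 : MonoidAlgebra k G ⊗[k] MonoidAlgebra k G)
      = (1 : MonoidAlgebra k G) ⊗ₜ[k] (1 : MonoidAlgebra k G) from
    (Algebra.TensorProduct.one_def ..), ← sum_Ech i, TensorProduct.sum_tmul]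
  refine Finset.sum_congr rfl fun χ _ => ?_
  rw [TensorProduct.tmul_sum]
  exact Finset.sum_congr rfl fun ξ _ => one_smul k _

lemma gτ_Sc (c : (A →* kˣ) → (A →* kˣ) → k) :
    gτ k G (Sc k i c) = Sc k i (fun χ ξ => c ξ χ) := by
  unfold Sc
  rw [map_sum, Finset.sum_comm]
  refine Finset.sum_congr rfl fun ξ _ => ?_
  rw [map_sum]
  refine Finset.sum_congr rfl fun χ _ => ?_
  rw [map_smul]
  congr 1

def precompEquiv (σ : MulAut A) : (A →* kˣ) ≃ (A →* kˣ) where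
  toFun χ := χ.comp σ.toMonoidHom
  invFun χ := χ.comp σ.symm.toMonoidHom
  left_inv χ := by ext a; simp
  right_inv χ := by ext a; simp

lemma Sc_commute (φ : G →* MulAut A)
    (hiφ : ∀ (g : G) (a : A), g * i a * g⁻¹ = i (φ g a))
    (c : (A →* kˣ) → (A →* kˣ) → k)
    (hc : ∀ (g : G) (χ ξ : A →* kˣ),
      c (χ.comp (φ g).toMonoidHom) (ξ.comp (φ g).toMonoidHom) = c χ ξ) (g : G) :
    (MonoidAlgebra.of k G g ⊗ₜ[k] MonoidAlgebra.of k G g) * Sc k i c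
      = Sc k i c * (MonoidAlgebra.of k G g ⊗ₜ[k] MonoidAlgebra.of k G g) := by
  unfold Sc
  rw [Finset.mul_sum, Finset.sum_mul]
  have lhs : ∀ χ ξ : A →* kˣ,
      (MonoidAlgebra.of k G g ⊗ₜ[k] MonoidAlgebra.of k G g) * (c χ ξ • (Ech k i χ ⊗ₜ[k] Ech k i ξ))
      = c χ ξ • ((Ech k i (χ.comp (φ g⁻¹).toMonoidHom) ⊗ₜ[k] Ech k i (ξ.comp (φ g⁻¹).toMonoidHom))
          * (MonoidAlgebra.of k G g ⊗ₜ[k] MonoidAlgebra.of k G g)) := by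
    intro χ ξ
    rw [mul_smul_comm, Algebra.TensorProduct.tmul_mul_tmul,
      Ech_conj i φ hiφ g χ, Ech_conj i φ hiφ g ξ, Algebra.TensorProduct.tmul_mul_tmul]
  refine Fintype.sum_equiv (precompEquiv (k := k) (φ g⁻¹)) _ _ fun χ => ?_
  rw [Finset.mul_sum, Finset.sum_mul]
  refine Fintype.sum_equiv (precompEquiv (k := k) (φ g⁻¹)) _ _ fun ξ => ?_
  rw [lhs χ ξ, smul_mul_assoc]
  simp only [precompEquiv, Equiv.coe_fn_mk]
  rw [hc g⁻¹ χ ξ]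

lemma gι13_Sc (c : (A →* kˣ) → (A →* kˣ) → k) :
    gι₁₃ k G (Sc k i c) = ∑ χ : A →* kˣ, ∑ ξ : A →* kˣ,
      c χ ξ • (Ech k i χ ⊗ₜ[k] ((1 : MonoidAlgebra k G) ⊗ₜ[k] Ech k i ξ)) := by
  unfold Sc
  rw [map_sum]
  refine Finset.sum_congr rfl fun χ _ => ?_
  rw [map_sum]
  refine Finset.sum_congr rfl fun ξ _ => ?_
  rw [map_smul, Algebra.TensorProduct.map_tmul, AlgHom.coe_id, id_eq,
    Algebra.TensorProduct.includeRight_apply]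

lemma gι12_Sc (c : (A →* kˣ) → (A →* kˣ) → k) :
    gι₁₂ k G (Sc k i c) = ∑ χ : A →* kˣ, ∑ ξ : A →* kˣ,
      c χ ξ • (Ech k i χ ⊗ₜ[k] (Ech k i ξ ⊗ₜ[k] (1 : MonoidAlgebra k G))) := by
  unfold Sc
  rw [map_sum]
  refine Finset.sum_congr rfl fun χ _ => ?_
  rw [map_sum]
  refine Finset.sum_congr rfl fun ξ _ => ?_
  rw [map_smul, Algebra.TensorProduct.map_tmul, AlgHom.coe_id, id_eq,
    Algebra.TensorProduct.includeLeft_apply]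

lemma gι23_Sc (c : (A →* kˣ) → (A →* kˣ) → k) :
    gι₂₃ k G (Sc k i c) = ∑ χ : A →* kˣ, ∑ ξ : A →* kˣ,
      c χ ξ • ((1 : MonoidAlgebra k G) ⊗ₜ[k] (Ech k i χ ⊗ₜ[k] Ech k i ξ)) := by
  unfold Sc
  rw [map_sum]
  refine Finset.sum_congr rfl fun χ _ => ?_
  rw [map_sum]
  refine Finset.sum_congr rfl fun ξ _ => ?_
  rw [map_smul, Algebra.TensorProduct.includeRight_apply]

lemma tensor_smul_mul {R M N : Type*} [CommSemiring R] [Semiring M] [Semiring N]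
    [Algebra R M] [Algebra R N] (a b : R) (x x' : M) (y y' : N) :
    (a • (x ⊗ₜ[R] y)) * (b • (x' ⊗ₜ[R] y')) = (a * b) • ((x * x') ⊗ₜ[R] (y * y')) := by
  rw [smul_mul_smul_comm, Algebra.TensorProduct.tmul_mul_tmul]

lemma H2lem (c d : (A →* kˣ) → (A →* kˣ) → k) :
    gι₁₃ k G (Sc k i c) * gι₁₂ k G (Sc k i d)
      = Tc k i (fun χ ψ ξ => c χ ξ * d χ ψ) := by
  rw [gι13_Sc, gι12_Sc]
  unfold Tc
  calc (∑ χ : A →* kˣ, ∑ ξ : A →* kˣ,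
          c χ ξ • (Ech k i χ ⊗ₜ[k] ((1 : MonoidAlgebra k G) ⊗ₜ[k] Ech k i ξ))) *
        (∑ χ' : A →* kˣ, ∑ ψ : A →* kˣ,
          d χ' ψ • (Ech k i χ' ⊗ₜ[k] (Ech k i ψ ⊗ₜ[k] (1 : MonoidAlgebra k G))))
      = ∑ χ : A →* kˣ, ∑ χ' : A →* kˣ,
          (∑ ξ : A →* kˣ, c χ ξ • (Ech k i χ ⊗ₜ[k] ((1 : MonoidAlgebra k G) ⊗ₜ[k] Ech k i ξ))) *
          (∑ ψ : A →* kˣ, d χ' ψ • (Ech k i χ' ⊗ₜ[k] (Ech k i ψ ⊗ₜ[k] (1 : MonoidAlgebra k G)))) :=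
        Finset.sum_mul_sum (R := MonoidAlgebra k G ⊗[k] (MonoidAlgebra k G ⊗[k] MonoidAlgebra k G)) _ _ _ _
    _ = ∑ χ : A →* kˣ, ∑ χ' : A →* kˣ, ∑ ξ : A →* kˣ, ∑ ψ : A →* kˣ,
          (c χ ξ * d χ' ψ) •
            ((Ech k i χ * Ech k i χ') ⊗ₜ[k] ((Ech k i ψ * 1) ⊗ₜ[k] (Ech k i ξ * 1))) := by
        refine Finset.sum_congr rfl fun χ _ => Finset.sum_congr rfl fun χ' _ => ?_
        refine (Finset.sum_mul_sum (R := MonoidAlgebra k G ⊗[k] (MonoidAlgebra k G ⊗[k] MonoidAlgebra k G)) _ _ _ _).trans ?_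
        refine Finset.sum_congr rfl fun ξ _ => Finset.sum_congr rfl fun ψ _ => ?_
        refine (tensor_smul_mul _ _ _ _ _ _).trans ?_
        rw [Algebra.TensorProduct.tmul_mul_tmul, one_mul, mul_one, mul_one]
    _ = ∑ χ : A →* kˣ, ∑ ξ : A →* kˣ, ∑ ψ : A →* kˣ,
          (c χ ξ * d χ ψ) • ((Ech k i χ) ⊗ₜ[k] (Ech k i ψ ⊗ₜ[k] (Ech k i ξ))) := by
        refine Finset.sum_congr rfl fun χ _ => ?_
        rw [Fintype.sum_eq_single χ fun χ' hχ' => ?_]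
        · refine Finset.sum_congr rfl fun ξ _ => Finset.sum_congr rfl fun ψ _ => ?_
          rw [Ech_mul, if_pos rfl, mul_one, mul_one]
        · refine Finset.sum_eq_zero fun ξ _ => Finset.sum_eq_zero fun ψ _ => ?_
          rw [Ech_mul, if_neg hχ', TensorProduct.zero_tmul, smul_zero]
    _ = ∑ χ : A →* kˣ, ∑ ψ : A →* kˣ, ∑ ξ : A →* kˣ,
          (c χ ξ * d χ ψ) • ((Ech k i χ) ⊗ₜ[k] (Ech k i ψ ⊗ₜ[k] (Ech k i ξ))) :=
        Finset.sum_congr rfl fun χ _ => Finset.sum_comm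

lemma H4lem (c d : (A →* kˣ) → (A →* kˣ) → k) :
    gι₁₃ k G (Sc k i c) * gι₂₃ k G (Sc k i d)
      = Tc k i (fun χ ψ ξ => c χ ξ * d ψ ξ) := by
  rw [gι13_Sc, gι23_Sc]
  unfold Tc
  calc (∑ χ : A →* kˣ, ∑ ξ : A →* kˣ,
          c χ ξ • (Ech k i χ ⊗ₜ[k] ((1 : MonoidAlgebra k G) ⊗ₜ[k] Ech k i ξ))) *
        (∑ ψ : A →* kˣ, ∑ ξ' : A →* kˣ,
          d ψ ξ' • ((1 : MonoidAlgebra k G) ⊗ₜ[k] (Ech k i ψ ⊗ₜ[k] Ech k i ξ')))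
      = ∑ χ : A →* kˣ, ∑ ψ : A →* kˣ,
          (∑ ξ : A →* kˣ, c χ ξ • (Ech k i χ ⊗ₜ[k] ((1 : MonoidAlgebra k G) ⊗ₜ[k] Ech k i ξ))) *
          (∑ ξ' : A →* kˣ, d ψ ξ' • ((1 : MonoidAlgebra k G) ⊗ₜ[k] (Ech k i ψ ⊗ₜ[k] Ech k i ξ'))) :=
        Finset.sum_mul_sum (R := MonoidAlgebra k G ⊗[k] (MonoidAlgebra k G ⊗[k] MonoidAlgebra k G)) _ _ _ _
    _ = ∑ χ : A →* kˣ, ∑ ψ : A →* kˣ, ∑ ξ : A →* kˣ, ∑ ξ' : A →* kˣ,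
          (c χ ξ * d ψ ξ') •
            ((Ech k i χ * 1) ⊗ₜ[k] ((1 * Ech k i ψ) ⊗ₜ[k] (Ech k i ξ * Ech k i ξ'))) := by
        refine Finset.sum_congr rfl fun χ _ => Finset.sum_congr rfl fun ψ _ => ?_
        refine (Finset.sum_mul_sum (R := MonoidAlgebra k G ⊗[k] (MonoidAlgebra k G ⊗[k] MonoidAlgebra k G)) _ _ _ _).trans ?_
        refine Finset.sum_congr rfl fun ξ _ => Finset.sum_congr rfl fun ξ' _ => ?_
        refine (tensor_smul_mul _ _ _ _ _ _).trans ?_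
        rw [Algebra.TensorProduct.tmul_mul_tmul]
    _ = ∑ χ : A →* kˣ, ∑ ψ : A →* kˣ, ∑ ξ : A →* kˣ,
          (c χ ξ * d ψ ξ) • ((Ech k i χ) ⊗ₜ[k] (Ech k i ψ ⊗ₜ[k] (Ech k i ξ))) := by
        refine Finset.sum_congr rfl fun χ _ => Finset.sum_congr rfl fun ψ _ => ?_
        refine Finset.sum_congr rfl fun ξ _ => ?_
        rw [Fintype.sum_eq_single ξ fun ξ' hξ' => ?_]
        · rw [Ech_mul, if_pos rfl, mul_one, one_mul]
        · rw [Ech_mul, if_neg hξ', TensorProduct.tmul_zero, TensorProduct.tmul_zero, smul_zero]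

lemma H1lem (c : (A →* kˣ) → (A →* kˣ) → k) :
    gidΔ k G (Sc k i c) = Tc k i (fun χ ψ ξ => c χ (ψ * ξ)) := by
  unfold Sc Tc
  rw [map_sum]
  refine Finset.sum_congr rfl fun χ _ => ?_
  rw [map_sum]
  calc ∑ ξ : A →* kˣ, gidΔ k G (c χ ξ • (Ech k i χ ⊗ₜ[k] Ech k i ξ))
      = ∑ ξ : A →* kˣ, ∑ ψ : A →* kˣ,
          c χ ξ • (Ech k i χ ⊗ₜ[k] (Ech k i ψ ⊗ₜ[k] Ech k i (ψ⁻¹ * ξ))) := by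
        refine Finset.sum_congr rfl fun ξ _ => ?_
        rw [map_smul, Algebra.TensorProduct.map_tmul, AlgHom.coe_id, id_eq, Ech_comul,
          TensorProduct.tmul_sum, Finset.smul_sum]
    _ = ∑ ψ : A →* kˣ, ∑ ξ : A →* kˣ,
          c χ ξ • (Ech k i χ ⊗ₜ[k] (Ech k i ψ ⊗ₜ[k] Ech k i (ψ⁻¹ * ξ))) := Finset.sum_comm
    _ = ∑ ψ : A →* kˣ, ∑ ξ : A →* kˣ,
          c χ (ψ * ξ) • (Ech k i χ ⊗ₜ[k] (Ech k i ψ ⊗ₜ[k] Ech k i ξ)) := by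
        refine Finset.sum_congr rfl fun ψ _ => ?_
        refine (Fintype.sum_equiv (Equiv.mulLeft ψ) _ _ fun ξ => ?_).symm
        have h : ψ⁻¹ * (ψ * ξ) = ξ := inv_mul_cancel_left ψ ξ
        show _ = _ • (_ ⊗ₜ[k] (_ ⊗ₜ[k] Ech k i (ψ⁻¹ * (ψ * ξ))))
        rw [h]
        rfl

lemma H3lem (c : (A →* kˣ) → (A →* kˣ) → k) :
    gΔid k G (Sc k i c) = Tc k i (fun χ ψ ξ => c (χ * ψ) ξ) := by
  unfold Sc Tc
  rw [map_sum]
  calc ∑ χ : A →* kˣ, gΔid k G (∑ ξ : A →* kˣ, c χ ξ • (Ech k i χ ⊗ₜ[k] Ech k i ξ))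
      = ∑ χ : A →* kˣ, ∑ ξ : A →* kˣ, ∑ ψ : A →* kˣ,
          c χ ξ • (Ech k i ψ ⊗ₜ[k] (Ech k i (ψ⁻¹ * χ) ⊗ₜ[k] Ech k i ξ)) := by
        refine Finset.sum_congr rfl fun χ _ => ?_
        rw [map_sum]
        refine Finset.sum_congr rfl fun ξ _ => ?_
        rw [show gΔid k G = (Algebra.TensorProduct.assoc k k k (MonoidAlgebra k G)
              (MonoidAlgebra k G) (MonoidAlgebra k G)).toAlgHom.comp
            (Algebra.TensorProduct.map (gComul k G) (AlgHom.id k _)) from rfl,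
          AlgHom.comp_apply, map_smul, Algebra.TensorProduct.map_tmul, AlgHom.coe_id, id_eq,
          Ech_comul, TensorProduct.sum_tmul, map_smul, map_sum, Finset.smul_sum]
        refine Finset.sum_congr rfl fun ψ _ => rfl
    _ = ∑ χ : A →* kˣ, ∑ ψ : A →* kˣ, ∑ ξ : A →* kˣ,
          c χ ξ • (Ech k i ψ ⊗ₜ[k] (Ech k i (ψ⁻¹ * χ) ⊗ₜ[k] Ech k i ξ)) :=
        Finset.sum_congr rfl fun χ _ => Finset.sum_comm
    _ = ∑ ψ : A →* kˣ, ∑ χ : A →* kˣ, ∑ ξ : A →* kˣ,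
          c χ ξ • (Ech k i ψ ⊗ₜ[k] (Ech k i (ψ⁻¹ * χ) ⊗ₜ[k] Ech k i ξ)) := Finset.sum_comm
    _ = ∑ ψ : A →* kˣ, ∑ χ : A →* kˣ, ∑ ξ : A →* kˣ,
          c (ψ * χ) ξ • (Ech k i ψ ⊗ₜ[k] (Ech k i χ ⊗ₜ[k] Ech k i ξ)) := by
        refine Finset.sum_congr rfl fun ψ _ => ?_
        refine (Fintype.sum_equiv (Equiv.mulLeft ψ) _ _ fun χ => ?_).symm
        have h : ψ⁻¹ * (ψ * χ) = χ := inv_mul_cancel_left ψ χ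
        show _ = ∑ x : A →* kˣ, c (ψ * χ) x • (Ech k i ψ ⊗ₜ[k] (Ech k i (ψ⁻¹ * (ψ * χ)) ⊗ₜ[k] Ech k i x))
        rw [h]

lemma hg_lemma (χ : A →* kˣ) :
    ∑ a : A, ((χ a : kˣ) : k) • MonoidAlgebra.of k G (i a)
      = (Fintype.card A : k) • Ech k i χ⁻¹ := by
  rw [Ech_single, Finset.smul_sum]
  refine Finset.sum_congr rfl fun a _ => ?_
  rw [MonoidAlgebra.smul_single]
  have h1 : (((χ⁻¹ : A →* kˣ) a⁻¹ : kˣ) : k) = ((χ a : kˣ) : k) := by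
    simp
  rw [h1, smul_eq_mul, ← single_eq_smul_of]
  congr 1
  rw [← mul_assoc, mul_inv_cancel₀ (cardA_ne (A := A) (k := k)), one_mul]

lemma inner_lemma (β : (A →* kˣ) → (A →* kˣ) → kˣ) (χ ξ : A →* kˣ) :
    ∑ a : A, ∑ b : A, ((β χ ξ : k) * ((χ a : kˣ) : k) * ((ξ b : kˣ) : k)) •
        (MonoidAlgebra.of k G (i a) ⊗ₜ[k] MonoidAlgebra.of k G (i b))
      = ((Fintype.card A : k) ^ 2 * (β χ ξ : k)) • (Ech k i χ⁻¹ ⊗ₜ[k] Ech k i ξ⁻¹) := by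
  have step1 : ∑ a : A, ∑ b : A, ((β χ ξ : k) * ((χ a : kˣ) : k) * ((ξ b : kˣ) : k)) •
        (MonoidAlgebra.of k G (i a) ⊗ₜ[k] MonoidAlgebra.of k G (i b))
      = (β χ ξ : k) • ((∑ a : A, ((χ a : kˣ) : k) • MonoidAlgebra.of k G (i a)) ⊗ₜ[k]
          (∑ b : A, ((ξ b : kˣ) : k) • MonoidAlgebra.of k G (i b))) := by
    rw [TensorProduct.sum_tmul, Finset.smul_sum]
    refine Finset.sum_congr rfl fun a _ => ?_
    rw [TensorProduct.tmul_sum, Finset.smul_sum]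
    refine Finset.sum_congr rfl fun b _ => ?_
    rw [← TensorProduct.smul_tmul', TensorProduct.tmul_smul, smul_smul, smul_smul]
  rw [step1, hg_lemma, hg_lemma, ← TensorProduct.smul_tmul', TensorProduct.tmul_smul,
    smul_smul, smul_smul]
  congr 1
  ring

lemma R_eq (β : (A →* kˣ) → (A →* kˣ) → kˣ)
    (hββ : ∀ χ ξ : A →* kˣ, β χ⁻¹ ξ⁻¹ = β χ ξ) :
    (((Fintype.card A : k) ^ 2)⁻¹ •
        ∑ᶠ χ : A →* kˣ, ∑ᶠ ξ : A →* kˣ, ∑ a : A, ∑ b : A,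
          ((β χ ξ : k) * ((χ a : kˣ) : k) * ((ξ b : kˣ) : k)) •
            (MonoidAlgebra.of k G (i a) ⊗ₜ[k] MonoidAlgebra.of k G (i b)))
      = Sc k i (fun χ ξ => ((β χ ξ : kˣ) : k)) := by
  have hn2 : ((Fintype.card A : k) ^ 2) ≠ 0 := pow_ne_zero _ (cardA_ne (A := A) (k := k))
  simp only [finsum_eq_sum_of_fintype]
  rw [Finset.sum_congr rfl fun χ _ => Finset.sum_congr rfl fun ξ _ => inner_lemma i β χ ξ]
  rw [Finset.smul_sum]
  unfold Sc
  refine (Fintype.sum_equiv (Equiv.inv (A →* kˣ)) _ _ fun χ => ?_)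
  rw [Finset.smul_sum]
  refine (Fintype.sum_equiv (Equiv.inv (A →* kˣ)) _ _ fun ξ => ?_)
  rw [smul_smul]
  have h1 : ((Fintype.card A : k) ^ 2)⁻¹ * ((Fintype.card A : k) ^ 2 * (β χ ξ : k))
      = (β χ ξ : k) := by
    field_simp
  rw [h1]
  show (β χ ξ : k) • (Ech k i χ⁻¹ ⊗ₜ[k] Ech k i ξ⁻¹)
      = (β χ⁻¹ ξ⁻¹ : k) • (Ech k i χ⁻¹ ⊗ₜ[k] Ech k i ξ⁻¹)
  rw [hββ]
end G
end Aux

/-- A normal inclusion `i : A → G` of a finite abelian group compatible with a `G`-action,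
together with a nondegenerate, `G`-invariant, skewsymmetric bimultiplicative form `β` on
`Â = Hom(A, kˣ)`, defines a *unitary* universal R-matrix
`R = |A|⁻² Σ_{a,b∈A} Σ_{χ,ξ∈Â} β(χ,ξ) χ(a) ξ(b) (i(a) ⊗ i(b))` on `k[G]`. -/
theorem groupAlgebra_unitary_RMatrix_of_skew_form {k : Type*} [Field k] [IsAlgClosed k]
    [CharZero k] {G A : Type*} [Group G] [CommGroup A] [Fintype A]
    (i : A →* G) (hi : Function.Injective i) (hiN : i.range.Normal)
    (φ : G →* MulAut A)
    (hiφ : ∀ (g : G) (a : A), g * i a * g⁻¹ = i (φ g a))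
    (β : (A →* kˣ) → (A →* kˣ) → kˣ)
    (hβl : ∀ χ χ' ξ, β (χ * χ') ξ = β χ ξ * β χ' ξ)
    (hβr : ∀ χ ξ ξ', β χ (ξ * ξ') = β χ ξ * β χ ξ')
    (hβnd : ∀ χ : A →* kˣ, χ ≠ 1 → ∃ ξ, β χ ξ ≠ 1)
    (hβskew : ∀ χ ξ, β χ ξ * β ξ χ = 1)
    (hβG : ∀ (g : G) (χ ξ : A →* kˣ),
      β (χ.comp (φ g).toMonoidHom) (ξ.comp (φ g).toMonoidHom) = β χ ξ) :
    IsGroupRMatrix k G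
      (((Fintype.card A : k) ^ 2)⁻¹ •
        ∑ᶠ χ : A →* kˣ, ∑ᶠ ξ : A →* kˣ, ∑ a : A, ∑ b : A,
          ((β χ ξ : k) * (χ a : k) * (ξ b : k)) •
            (MonoidAlgebra.of k G (i a) ⊗ₜ[k] MonoidAlgebra.of k G (i b))) ∧
    (((Fintype.card A : k) ^ 2)⁻¹ •
        ∑ᶠ χ : A →* kˣ, ∑ᶠ ξ : A →* kˣ, ∑ a : A, ∑ b : A,
          ((β χ ξ : k) * (χ a : k) * (ξ b : k)) •
            (MonoidAlgebra.of k G (i a) ⊗ₜ[k] MonoidAlgebra.of k G (i b))) *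
      gτ k G (((Fintype.card A : k) ^ 2)⁻¹ •
        ∑ᶠ χ : A →* kˣ, ∑ᶠ ξ : A →* kˣ, ∑ a : A, ∑ b : A,
          ((β χ ξ : k) * (χ a : k) * (ξ b : k)) •
            (MonoidAlgebra.of k G (i a) ⊗ₜ[k] MonoidAlgebra.of k G (i b))) = 1 := by
  classical
  have hβ1l : ∀ ξ : A →* kˣ, β 1 ξ = 1 := fun ξ => by
    have h := hβl 1 1 ξ
    rw [show (1 * 1 : A →* kˣ) = 1 by ext a; simp] at h
    exact (left_eq_mul.mp h)
  have hβ1r : ∀ χ : A →* kˣ, β χ 1 = 1 := fun χ => by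
    have h := hβr χ 1 1
    rw [show (1 * 1 : A →* kˣ) = 1 by ext a; simp] at h
    exact (left_eq_mul.mp h)
  have hβinvl : ∀ χ ξ : A →* kˣ, β χ⁻¹ ξ = (β χ ξ)⁻¹ := fun χ ξ => by
    have h := hβl χ χ⁻¹ ξ
    rw [show χ * χ⁻¹ = 1 by ext a; simp, hβ1l] at h
    exact eq_inv_of_mul_eq_one_right h.symm
  have hβinvr : ∀ χ ξ : A →* kˣ, β χ ξ⁻¹ = (β χ ξ)⁻¹ := fun χ ξ => by
    have h := hβr χ ξ ξ⁻¹
    rw [show ξ * ξ⁻¹ = 1 by ext a; simp, hβ1r] at h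
    exact eq_inv_of_mul_eq_one_right h.symm
  have hββ : ∀ χ ξ : A →* kˣ, β χ⁻¹ ξ⁻¹ = β χ ξ := fun χ ξ => by
    rw [hβinvl, hβinvr, inv_inv]
  have hR := R_eq i β hββ
  have hc : ∀ (g : G) (χ ξ : A →* kˣ),
      ((β (χ.comp (φ g).toMonoidHom) (ξ.comp (φ g).toMonoidHom) : kˣ) : k)
        = ((β χ ξ : kˣ) : k) := fun g χ ξ => congrArg Units.val (hβG g χ ξ)
  refine ⟨⟨?_, ?_, ?_, ?_⟩, ?_⟩
  · rw [hR]
    refine isUnit_iff_exists.mpr ⟨Sc k i (fun χ ξ => ((β χ ξ : kˣ) : k)⁻¹), ?_, ?_⟩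
    · rw [Sc_mul, show (fun χ ξ => ((β χ ξ : kˣ) : k) * ((β χ ξ : kˣ) : k)⁻¹)
          = fun _ _ : A →* kˣ => (1 : k) from
        funext fun χ => funext fun ξ => mul_inv_cancel₀ (Units.ne_zero _), Sc_one]
    · rw [Sc_mul, show (fun χ ξ => ((β χ ξ : kˣ) : k)⁻¹ * ((β χ ξ : kˣ) : k))
          = fun _ _ : A →* kˣ => (1 : k) from
        funext fun χ => funext fun ξ => inv_mul_cancel₀ (Units.ne_zero _), Sc_one]
  · intro h
    rw [hR]
    induction h using MonoidAlgebra.induction_on with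
    | of g =>
      rw [gComul_of]
      have hτ : gτ k G (MonoidAlgebra.of k G g ⊗ₜ[k] MonoidAlgebra.of k G g)
          = MonoidAlgebra.of k G g ⊗ₜ[k] MonoidAlgebra.of k G g := rfl
      rw [hτ]
      exact (Sc_commute i φ hiφ _ hc g).symm
    | add f g hf hg => rw [map_add, map_add, add_mul, mul_add, hf, hg]
    | smul r f hf => rw [map_smul, map_smul, mul_smul_comm, smul_mul_assoc, hf]
  · rw [hR, H1lem, H2lem]
    refine congrArg (Tc k i) ?_
    funext χ ψ ξ
    rw [hβr χ ψ ξ, Units.val_mul]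
    exact mul_comm _ _
  · rw [hR, H3lem, H4lem]
    refine congrArg (Tc k i) ?_
    funext χ ψ ξ
    rw [hβl χ ψ ξ, Units.val_mul]
  · rw [hR, gτ_Sc, Sc_mul,
      show (fun χ ξ => ((β χ ξ : kˣ) : k) * ((β ξ χ : kˣ) : k))
          = fun _ _ : A →* kˣ => (1 : k) from
        funext fun χ => funext fun ξ => by rw [← Units.val_mul, hβskew, Units.val_one], Sc_one]


end
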